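/- Let (a_i)_{i≥1} and (b_j)_{j≥1} be summable nonnegative sequences with a := ∑ a_i < 1, and let S_{p+1} = ∑_{i≥p+1} a_i, T_s = ∑_{j≥s} b_j. Fix r ≥ 1 and define ω_t = inf_{p≥1} { a^{(t-r)/p} + S_{p+1} + ∑_{j=0}^{t-r+1} a^{j/p} T_{t-r+1-j} } for t > r (with T_0 := ∑_{j≥0} b_j, extending b to j=0 by b_0 = 0 or a fixed value). If a_i ≤ c₁ λ^i and b_j ≤ c₂ λ^j for some c₁, c₂ > 0 and λ ∈ (0,1), then there exist C > 0 and μ ∈ (0,1) such that ω_t ≤ C μ^{√(t-r)} for all t > r; in particular ∑_{t>r} ω_t < ∞. -/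

import Mathlib

private lemma tail_le (f : ℕ → ℝ) (c lam : ℝ) (hf0 : ∀ i, 0 ≤ f i) (hc : 0 ≤ c)
    (h0 : 0 ≤ lam) (h1 : lam < 1) (hf : ∀ i, f i ≤ c * lam ^ i) (k : ℕ) :
    (∑' i : ℕ, f (k + i)) ≤ c * lam ^ k / (1 - lam) := by
  have hg : Summable (fun i : ℕ => c * lam ^ (k + i)) := by
    simp_rw [pow_add, ← mul_assoc]
    exact (summable_geometric_of_lt_one h0 h1).mul_left _
  have hfs : Summable (fun i : ℕ => f (k + i)) :=
    hg.of_nonneg_of_le (fun i => hf0 _) (fun i => hf _)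
  calc (∑' i : ℕ, f (k + i)) ≤ ∑' i : ℕ, c * lam ^ (k + i) :=
        Summable.tsum_le_tsum (fun i => hf _) hfs hg
    _ = c * lam ^ k / (1 - lam) := by
        simp_rw [pow_add, ← mul_assoc]
        rw [tsum_mul_left, tsum_geometric_of_lt_one h0 h1]
        ring

private lemma pow_le_exp' (δ x : ℝ) (k : ℕ) (hδ : 0 < δ) (hx : 0 ≤ x) (hk : k ≠ 0) :
    x ^ k ≤ ((k : ℝ) / δ) ^ k * Real.exp (δ * x) := by
  have hk0 : (0:ℝ) < (k : ℝ) := by exact_mod_cast Nat.pos_of_ne_zero hk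
  have h1 : (δ / k) * x ≤ Real.exp ((δ / k) * x) := by
    have := Real.add_one_le_exp ((δ / k) * x); linarith
  have h2 : x ≤ ((k : ℝ) / δ) * Real.exp ((δ / k) * x) := by
    have hq : x = ((k : ℝ) / δ) * ((δ / k) * x) := by field_simp
    rw [hq]
    exact mul_le_mul_of_nonneg_left (by rw [← hq]; exact h1) (by positivity)
  calc x ^ k ≤ (((k : ℝ) / δ) * Real.exp ((δ / k) * x)) ^ k :=
        pow_le_pow_left₀ hx h2 k
    _ = ((k : ℝ) / δ) ^ k * Real.exp (δ * x) := by
        rw [mul_pow, ← Real.exp_nat_mul]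
        congr 2
        field_simp

set_option maxHeartbeats 1000000 in
theorem stmt18 (a b : ℕ → ℝ) (r : ℕ) (c₁ c₂ lam : ℝ)
    (ha0 : ∀ i, 0 ≤ a i) (hb0 : ∀ j, 0 ≤ b j)
    (hc₁ : 0 < c₁) (hc₂ : 0 < c₂) (hlam : lam ∈ Set.Ioo (0 : ℝ) 1)
    (hageo : ∀ i, a i ≤ c₁ * lam ^ i) (hbgeo : ∀ j, b j ≤ c₂ * lam ^ j)
    (hA : (∑' i : ℕ, a (i + 1)) < 1) (hr : 1 ≤ r)
    (ω : ℕ → ℝ)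
    (hω : ∀ t, r < t → ω t = ⨅ p : {p : ℕ // 1 ≤ p},
      ((∑' i : ℕ, a (i + 1)) ^ (((t - r : ℕ) : ℝ) / (p : ℕ)) +
        (∑' i : ℕ, a ((p : ℕ) + 1 + i)) +
        ∑ j ∈ Finset.range (t - r + 2),
          (∑' i : ℕ, a (i + 1)) ^ ((j : ℝ) / (p : ℕ)) *
            ∑' i : ℕ, b (t - r + 1 - j + i))) :
    ∃ C : ℝ, 0 < C ∧ ∃ μ ∈ Set.Ioo (0 : ℝ) 1,
      (∀ t, r < t → ω t ≤ C * μ ^ Real.sqrt ((t - r : ℕ) : ℝ)) ∧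
      Summable (fun s : ℕ => ω (r + 1 + s)) := by
  obtain ⟨hl0, hl1⟩ := hlam
  set A := ∑' i : ℕ, a (i + 1) with hAdef
  have hA0 : 0 ≤ A := tsum_nonneg fun i => ha0 _
  set ρ := max A lam with hρdef
  have hρ0 : 0 < ρ := lt_of_lt_of_le hl0 (le_max_right _ _)
  have hρ1 : ρ < 1 := max_lt hA hl1
  have hAρ : A ≤ ρ := le_max_left _ _
  have hlr : lam ≤ ρ := le_max_right _ _
  have h1l : 0 < 1 - lam := by linarith
  set δ := -Real.log ρ with hδdef
  have hδ : 0 < δ := by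
    have := Real.log_neg hρ0 hρ1; linarith
  have hlogρ : Real.log ρ = -δ := by rw [hδdef, neg_neg]
  have hρexp : ∀ x : ℝ, ρ ^ x = Real.exp (-(δ * x)) := fun x => by
    rw [Real.rpow_def_of_pos hρ0, hlogρ]; ring_nf
  set μ := Real.exp (-(δ / 2)) with hμdef
  have hμ0 : 0 < μ := Real.exp_pos _
  have hμ1 : μ < 1 := Real.exp_lt_one_iff.mpr (by linarith)
  have hμpow : ∀ x : ℝ, μ ^ x = Real.exp (-(δ / 2 * x)) := fun x => by
    rw [hμdef, Real.rpow_def_of_pos (Real.exp_pos _), Real.log_exp]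
    congr 1; ring
  set K := 1 + c₁ / (1 - lam) + c₂ / (1 - lam) with hKdef
  have hc₁' : 0 < c₁ / (1 - lam) := div_pos hc₁ h1l
  have hc₂' : 0 < c₂ / (1 - lam) := div_pos hc₂ h1l
  have hK : 0 < K := by rw [hKdef]; linarith
  set C := 48 * K * Real.exp δ / δ ^ 2 with hCdef
  have hC : 0 < C := by
    rw [hCdef]; positivity
  -- nonnegativity of ω
  have hω0 : ∀ t, r < t → 0 ≤ ω t := by
    intro t ht
    rw [hω t ht]
    apply Real.iInf_nonneg
    intro q
    exact add_nonneg (add_nonneg (Real.rpow_nonneg hA0 _) (tsum_nonneg fun i => ha0 _))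
      (Finset.sum_nonneg fun j _ => mul_nonneg (Real.rpow_nonneg hA0 _)
        (tsum_nonneg fun i => hb0 _))
  -- main stretched-exponential bound
  have hmain : ∀ t, r < t → ω t ≤ C * μ ^ Real.sqrt ((t - r : ℕ) : ℝ) := by
    intro t ht
    rw [hω t ht]
    set n := t - r with hndef
    have hn1 : 1 ≤ n := by omega
    have hn1' : (1:ℝ) ≤ (n:ℝ) := by exact_mod_cast hn1
    set s := Real.sqrt (n : ℝ) with hsdef
    have hs0 : 0 ≤ s := Real.sqrt_nonneg _
    have hs2 : s ^ 2 = (n:ℝ) := Real.sq_sqrt (by linarith)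
    have hs1 : 1 ≤ s := by nlinarith
    set p : ℕ := ⌈s⌉₊ with hpdef
    have hp1 : 1 ≤ p := Nat.one_le_ceil_iff.mpr (by linarith)
    have hp1' : (1:ℝ) ≤ (p:ℝ) := by exact_mod_cast hp1
    have hp0 : (0:ℝ) < (p:ℝ) := by linarith
    have hsp : s ≤ (p:ℝ) := Nat.le_ceil _
    have hps : (p:ℝ) ≤ s + 1 := le_of_lt (Nat.ceil_lt_add_one hs0)
    have hspn : (s - 1) * (p:ℝ) ≤ (n:ℝ) := by nlinarith
    have hρnn : 0 ≤ ρ ^ (s - 1 : ℝ) := Real.rpow_nonneg hρ0.le _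
    have hBdd : BddBelow (Set.range fun q : {q : ℕ // 1 ≤ q} =>
        (A ^ (((n : ℕ) : ℝ) / ((q : ℕ) : ℝ)) +
          (∑' i : ℕ, a ((q : ℕ) + 1 + i)) +
          ∑ j ∈ Finset.range (n + 2),
            A ^ ((j : ℝ) / ((q : ℕ) : ℝ)) * ∑' i : ℕ, b (n + 1 - j + i))) := by
      refine ⟨0, ?_⟩
      rintro x ⟨q, rfl⟩
      exact add_nonneg (add_nonneg (Real.rpow_nonneg hA0 _) (tsum_nonneg fun i => ha0 _))
        (Finset.sum_nonneg fun j _ => mul_nonneg (Real.rpow_nonneg hA0 _)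
          (tsum_nonneg fun i => hb0 _))
    refine le_trans (ciInf_le hBdd ⟨p, hp1⟩) ?_
    show A ^ (((n : ℕ) : ℝ) / ((p : ℕ) : ℝ)) +
          (∑' i : ℕ, a (p + 1 + i)) +
          (∑ j ∈ Finset.range (n + 2),
            A ^ ((j : ℝ) / ((p : ℕ) : ℝ)) * ∑' i : ℕ, b (n + 1 - j + i)) ≤
        C * μ ^ s
    have hT1 : A ^ (((n:ℕ):ℝ) / ((p:ℕ):ℝ)) ≤ ρ ^ (s - 1 : ℝ) := by
      calc A ^ (((n:ℕ):ℝ) / ((p:ℕ):ℝ)) ≤ ρ ^ (((n:ℕ):ℝ) / ((p:ℕ):ℝ)) :=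
            Real.rpow_le_rpow hA0 hAρ (by positivity)
        _ ≤ ρ ^ (s - 1 : ℝ) := Real.rpow_le_rpow_of_exponent_ge hρ0 hρ1.le
            (by rw [le_div_iff₀ hp0]; exact hspn)
    have hT2 : (∑' i : ℕ, a (p + 1 + i)) ≤ c₁ / (1 - lam) * ρ ^ (s - 1 : ℝ) := by
      refine (tail_le a c₁ lam ha0 hc₁.le hl0.le hl1 hageo (p + 1)).trans ?_
      have hpow : lam ^ (p + 1) ≤ ρ ^ (s - 1 : ℝ) := by
        calc lam ^ (p + 1) ≤ ρ ^ (p + 1) := pow_le_pow_left₀ hl0.le hlr _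
          _ = ρ ^ (((p + 1 : ℕ) : ℝ)) := (Real.rpow_natCast ρ (p + 1)).symm
          _ ≤ ρ ^ (s - 1 : ℝ) := Real.rpow_le_rpow_of_exponent_ge hρ0 hρ1.le
              (by push_cast; linarith)
      calc c₁ * lam ^ (p + 1) / (1 - lam) = c₁ / (1 - lam) * lam ^ (p + 1) := by ring
        _ ≤ c₁ / (1 - lam) * ρ ^ (s - 1 : ℝ) :=
            mul_le_mul_of_nonneg_left hpow hc₁'.le
    have hT3 : (∑ j ∈ Finset.range (n + 2),
          A ^ ((j : ℝ) / ((p:ℕ):ℝ)) * ∑' i : ℕ, b (n + 1 - j + i)) ≤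
        ((n:ℝ) + 2) * (c₂ / (1 - lam) * ρ ^ (s - 1 : ℝ)) := by
      have hterm : ∀ j ∈ Finset.range (n + 2),
          A ^ ((j : ℝ) / ((p:ℕ):ℝ)) * (∑' i : ℕ, b (n + 1 - j + i)) ≤
            c₂ / (1 - lam) * ρ ^ (s - 1 : ℝ) := by
        intro j hj
        have hjn : j ≤ n + 1 := by
          have := Finset.mem_range.mp hj; omega
        have hjr : (j:ℝ) ≤ (n:ℝ) + 1 := by exact_mod_cast hjn
        have hTb : (∑' i : ℕ, b (n + 1 - j + i)) ≤ c₂ * lam ^ (n + 1 - j) / (1 - lam) :=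
          tail_le b c₂ lam hb0 hc₂.le hl0.le hl1 hbgeo _
        have hArho : A ^ ((j:ℝ) / ((p:ℕ):ℝ)) ≤ ρ ^ ((j:ℝ) / ((p:ℕ):ℝ)) :=
          Real.rpow_le_rpow hA0 hAρ (by positivity)
        have hcast : (((n + 1 - j : ℕ)) : ℝ) = (n:ℝ) + 1 - (j:ℝ) := by
          have h : ((n + 1 - j : ℕ) : ℝ) = ((n + 1 : ℕ) : ℝ) - (j : ℝ) := Nat.cast_sub hjn
          push_cast at h ⊢; linarith
        have hcomb : ρ ^ ((j:ℝ) / ((p:ℕ):ℝ)) * lam ^ (n + 1 - j) ≤ ρ ^ (s - 1 : ℝ) := by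
          have hl : lam ^ (n + 1 - j) ≤ ρ ^ (n + 1 - j) := pow_le_pow_left₀ hl0.le hlr _
          calc ρ ^ ((j:ℝ) / ((p:ℕ):ℝ)) * lam ^ (n + 1 - j)
              ≤ ρ ^ ((j:ℝ) / ((p:ℕ):ℝ)) * ρ ^ (n + 1 - j) :=
                mul_le_mul_of_nonneg_left hl (Real.rpow_nonneg hρ0.le _)
            _ = ρ ^ ((j:ℝ) / ((p:ℕ):ℝ) + ((n + 1 - j : ℕ) : ℝ)) := by
                rw [← Real.rpow_natCast ρ (n + 1 - j), ← Real.rpow_add hρ0]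
            _ ≤ ρ ^ (s - 1 : ℝ) := by
                apply Real.rpow_le_rpow_of_exponent_ge hρ0 hρ1.le
                rw [hcast, div_add' _ _ _ hp0.ne', le_div_iff₀ hp0]
                nlinarith [mul_le_mul_of_nonneg_left hp1'
                  (show (0:ℝ) ≤ (n:ℝ) + 1 - j by linarith), hspn]
        calc A ^ ((j:ℝ) / ((p:ℕ):ℝ)) * (∑' i : ℕ, b (n + 1 - j + i))
            ≤ ρ ^ ((j:ℝ) / ((p:ℕ):ℝ)) * (c₂ * lam ^ (n + 1 - j) / (1 - lam)) :=
              mul_le_mul hArho hTb (tsum_nonneg fun i => hb0 _) (Real.rpow_nonneg hρ0.le _)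
          _ = c₂ / (1 - lam) * (ρ ^ ((j:ℝ) / ((p:ℕ):ℝ)) * lam ^ (n + 1 - j)) := by ring
          _ ≤ c₂ / (1 - lam) * ρ ^ (s - 1 : ℝ) :=
              mul_le_mul_of_nonneg_left hcomb hc₂'.le
      calc (∑ j ∈ Finset.range (n + 2),
            A ^ ((j : ℝ) / ((p:ℕ):ℝ)) * ∑' i : ℕ, b (n + 1 - j + i))
          ≤ ∑ j ∈ Finset.range (n + 2), c₂ / (1 - lam) * ρ ^ (s - 1 : ℝ) :=
            Finset.sum_le_sum hterm
        _ = ((n:ℝ) + 2) * (c₂ / (1 - lam) * ρ ^ (s - 1 : ℝ)) := by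
            rw [Finset.sum_const, Finset.card_range]
            push_cast; ring
    have htot : A ^ (((n:ℕ):ℝ) / ((p:ℕ):ℝ)) +
          (∑' i : ℕ, a (p + 1 + i)) +
          (∑ j ∈ Finset.range (n + 2),
            A ^ ((j : ℝ) / ((p:ℕ):ℝ)) * ∑' i : ℕ, b (n + 1 - j + i)) ≤
        ((n:ℝ) + 2) * K * ρ ^ (s - 1 : ℝ) := by
      have h1 : ((n:ℝ) + 2) * K * ρ ^ (s - 1 : ℝ) =
          ((n:ℝ) + 2) * ρ ^ (s - 1 : ℝ) + ((n:ℝ) + 2) * (c₁ / (1 - lam)) * ρ ^ (s - 1 : ℝ)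
            + ((n:ℝ) + 2) * (c₂ / (1 - lam) * ρ ^ (s - 1 : ℝ)) := by
        rw [hKdef]; ring
      have h2 : ρ ^ (s - 1 : ℝ) ≤ ((n:ℝ) + 2) * ρ ^ (s - 1 : ℝ) := by nlinarith
      have h3 : c₁ / (1 - lam) * ρ ^ (s - 1 : ℝ) ≤
          ((n:ℝ) + 2) * (c₁ / (1 - lam)) * ρ ^ (s - 1 : ℝ) := by nlinarith
      linarith [hT1, hT2, hT3]
    refine htot.trans ?_
    -- final exponential comparison
    rw [hρexp, hμpow]
    have hsq := pow_le_exp' (δ / 2) s 2 (by linarith) hs0 (by norm_num)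
    have hsq' : (n:ℝ) ≤ 16 / δ ^ 2 * Real.exp ((δ / 2) * s) := by
      have he : (((2:ℕ):ℝ) / (δ / 2)) ^ 2 = 16 / δ ^ 2 := by
        push_cast
        rw [div_div_eq_mul_div, div_pow]
        norm_num
      rw [← hs2]
      calc s ^ 2 ≤ (((2:ℕ):ℝ) / (δ / 2)) ^ 2 * Real.exp ((δ / 2) * s) := hsq
        _ = 16 / δ ^ 2 * Real.exp ((δ / 2) * s) := by rw [he]
    have h48 : ((n:ℝ) + 2) ≤ 3 * (16 / δ ^ 2 * Real.exp ((δ / 2) * s)) := by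
      linarith
    have hexp1 : Real.exp ((δ / 2) * s) * Real.exp (-(δ * (s - 1))) =
        Real.exp δ * Real.exp (-(δ / 2 * s)) := by
      rw [← Real.exp_add, ← Real.exp_add]; ring_nf
    calc ((n:ℝ) + 2) * K * Real.exp (-(δ * (s - 1)))
        ≤ (3 * (16 / δ ^ 2 * Real.exp ((δ / 2) * s))) * K * Real.exp (-(δ * (s - 1))) :=
          mul_le_mul_of_nonneg_right (mul_le_mul_of_nonneg_right h48 hK.le)
            (Real.exp_pos _).le
      _ = 48 * K / δ ^ 2 * (Real.exp ((δ / 2) * s) * Real.exp (-(δ * (s - 1)))) := by ring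
      _ = 48 * K / δ ^ 2 * (Real.exp δ * Real.exp (-(δ / 2 * s))) := by rw [hexp1]
      _ = C * Real.exp (-(δ / 2 * s)) := by rw [hCdef]; ring
  refine ⟨C, hC, μ, ⟨hμ0, hμ1⟩, hmain, ?_⟩
  -- summability
  set B := ((4:ℕ) / (δ / 2) : ℝ) ^ 4 with hBdef
  have hB0 : 0 < B := by rw [hBdef]; positivity
  have hbnd : ∀ m : ℕ, ω (r + 1 + m) ≤ (C * B) * (1 / ((m:ℝ) + 1) ^ 2) := by
    intro m
    have ht : r < r + 1 + m := by omega
    have h1 : (r + 1 + m) - r = m + 1 := by omega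
    have hmn := hmain (r + 1 + m) ht
    rw [h1] at hmn
    set x := Real.sqrt ((m + 1 : ℕ) : ℝ) with hxdef
    have hx0 : 0 ≤ x := Real.sqrt_nonneg _
    have hx2 : x ^ 2 = ((m:ℝ) + 1) := by
      rw [hxdef]
      rw [Real.sq_sqrt (by positivity)]
      push_cast; ring
    have hm1 : (0:ℝ) < ((m:ℝ) + 1) ^ 2 := by positivity
    have hx4 := pow_le_exp' (δ / 2) x 4 (by linarith) hx0 (by norm_num)
    have hkey : μ ^ x ≤ B / ((m:ℝ) + 1) ^ 2 := by
      rw [le_div_iff₀ hm1, hμpow]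
      have hexpand : ((m:ℝ) + 1) ^ 2 = x ^ 4 := by
        rw [← hx2]; ring
      rw [hexpand]
      calc Real.exp (-(δ / 2 * x)) * x ^ 4
          ≤ Real.exp (-(δ / 2 * x)) * ((((4:ℕ):ℝ) / (δ / 2)) ^ 4 * Real.exp ((δ / 2) * x)) :=
            mul_le_mul_of_nonneg_left hx4 (Real.exp_pos _).le
        _ = B * (Real.exp (-(δ / 2 * x)) * Real.exp ((δ / 2) * x)) := by
            rw [hBdef]; push_cast; ring
        _ = B := by
            rw [← Real.exp_add]
            norm_num
    calc ω (r + 1 + m) ≤ C * μ ^ x := hmn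
      _ ≤ C * (B / ((m:ℝ) + 1) ^ 2) := mul_le_mul_of_nonneg_left hkey hC.le
      _ = (C * B) * (1 / ((m:ℝ) + 1) ^ 2) := by ring
  have hgsum : Summable (fun m : ℕ => (C * B) * (1 / ((m:ℝ) + 1) ^ 2)) := by
    have hz : Summable (fun m : ℕ => 1 / ((m:ℝ)) ^ 2) :=
      Real.summable_one_div_nat_pow.mpr one_lt_two
    have hz1 : Summable (fun m : ℕ => 1 / (((m + 1 : ℕ)):ℝ) ^ 2) :=
      (summable_nat_add_iff 1).mpr hz
    refine Summable.mul_left _ (hz1.congr ?_)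
    intro m; push_cast; ring
  exact Summable.of_nonneg_of_le (fun m => hω0 _ (by omega)) hbnd hgsum
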